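/- Let E be an n×n complex Hermitian positive definite matrix. For every n×n complex Hermitian positive definite matrix W, log det(W) − Re(Tr(W·E)) + n ≤ −log det(E) (where det(W) and det(E) are real and positive), and equality holds for W = E⁻¹. Consequently, −log det(E) = sup over Hermitian positive definite W of (log det(W) − Re(Tr(W·E)) + n), and the supremum is attained at W⋆ = E⁻¹. -/

import Mathlib

open Matrix ComplexOrder

lemma herm_trace_eq {n : ℕ} {M : Matrix (Fin n) (Fin n) ℂ} (hM : M.IsHermitian) :
    M.trace = ↑(∑ i, hM.eigenvalues i) := by
  conv_lhs => rw [hM.spectral_theorem, Unitary.conjStarAlgAut_apply]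
  rw [trace_mul_comm, ← mul_assoc, (Matrix.mem_unitaryGroup_iff').mp (hM.eigenvectorUnitary).2,
    one_mul, trace_diagonal]
  push_cast
  rfl

lemma posdef_det_ofReal {n : ℕ} {M : Matrix (Fin n) (Fin n) ℂ} (hM : M.PosDef) :
    M.det = ↑M.det.re ∧ 0 < M.det.re := by
  have h : (0:ℂ) < M.det := hM.det_pos
  rw [Complex.lt_def] at h
  refine ⟨Complex.ext rfl ?_, by simpa using h.1⟩
  simp [← h.2]

/-- key: for posdef M, log det M ≤ trace M - n -/
lemma logdet_le_trace {n : ℕ} {M : Matrix (Fin n) (Fin n) ℂ} (hM : M.PosDef) :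
    Real.log M.det.re ≤ M.trace.re - n := by
  have hdet : M.det = ↑(∏ i, hM.1.eigenvalues i) := by
    rw [hM.1.det_eq_prod_eigenvalues]; push_cast; rfl
  have htr : M.trace = ↑(∑ i, hM.1.eigenvalues i) := herm_trace_eq hM.1
  rw [hdet, htr, Complex.ofReal_re, Complex.ofReal_re]
  have hpos : ∀ i ∈ Finset.univ, hM.1.eigenvalues i ≠ 0 := fun i _ => (hM.eigenvalues_pos i).ne'
  rw [Real.log_prod hpos]
  calc ∑ i, Real.log (hM.1.eigenvalues i)
      ≤ ∑ i, (hM.1.eigenvalues i - 1) := by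
        exact Finset.sum_le_sum fun i _ => Real.log_le_sub_one_of_pos (hM.eigenvalues_pos i)
    _ = (∑ i, hM.1.eigenvalues i) - n := by
        rw [Finset.sum_sub_distrib]; simp

theorem wmmse_logdet_variational {n : ℕ} (E : Matrix (Fin n) (Fin n) ℂ) (hE : E.PosDef) :
    (∀ W : Matrix (Fin n) (Fin n) ℂ, W.PosDef →
      Real.log W.det.re - ((W * E).trace).re + n ≤ - Real.log E.det.re) ∧
    (E⁻¹).PosDef ∧
    (Real.log (E⁻¹).det.re - ((E⁻¹ * E).trace).re + n = - Real.log E.det.re) ∧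
    IsGreatest {v : ℝ | ∃ W : Matrix (Fin n) (Fin n) ℂ, W.PosDef ∧
        v = Real.log W.det.re - ((W * E).trace).re + n}
      (- Real.log E.det.re) := by
  obtain ⟨hEd, hEdpos⟩ := posdef_det_ofReal hE
  have hEunit : IsUnit E.det := isUnit_iff_ne_zero.mpr hE.det_pos.ne'
  -- the inequality
  have hineq : ∀ W : Matrix (Fin n) (Fin n) ℂ, W.PosDef →
      Real.log W.det.re - ((W * E).trace).re + n ≤ - Real.log E.det.re := by
    intro W hW
    obtain ⟨hWd, hWdpos⟩ := posdef_det_ofReal hW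
    set S := (open scoped MatrixOrder in CFC.sqrt E) with hS
    have hSS : S * S = E := by
      open scoped MatrixOrder in exact CFC.sqrt_mul_sqrt_self E hE.posSemidef.nonneg
    have hSH : S.IsHermitian := by
      open scoped MatrixOrder in exact (CFC.sqrt_nonneg E).posSemidef.1
    have hSdet : S.det ≠ 0 := by
      intro h
      apply hE.det_pos.ne'
      rw [← hSS, det_mul, h, zero_mul]
    -- M := S * W * S is posdef
    have hM : (S * W * S).PosDef := by
      refine posDef_iff_dotProduct_mulVec.mpr ⟨by
        have := isHermitian_conjTranspose_mul_mul S hW.1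
        rwa [hSH.eq] at this, fun x hx => ?_⟩
      have hx' : S *ᵥ x ≠ 0 := by
        intro h
        apply hx
        have hinj := Matrix.mulVec_injective_iff_isUnit.mpr
          ((Matrix.isUnit_iff_isUnit_det S).mpr (isUnit_iff_ne_zero.mpr hSdet))
        have h0 : S *ᵥ x = S *ᵥ 0 := by simpa using h
        exact hinj h0
      have e1 : star x ⬝ᵥ (S * W * S) *ᵥ x = star (S *ᵥ x) ⬝ᵥ W *ᵥ (S *ᵥ x) := by
        have hstar : star (S *ᵥ x) = star x ᵥ* S := by rw [star_mulVec, hSH.eq]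
        rw [hstar, ← mulVec_mulVec, ← mulVec_mulVec, dotProduct_mulVec]
      rw [e1]
      exact (posDef_iff_dotProduct_mulVec.mp hW).2 (x := S *ᵥ x) hx'
    have hdetM : (S * W * S).det.re = W.det.re * E.det.re := by
      have : (S * W * S).det = W.det * E.det := by
        rw [det_mul, det_mul, ← hSS, det_mul]; ring
      rw [this, hWd, hEd, ← Complex.ofReal_mul, Complex.ofReal_re]
      simp
    have htrM : (S * W * S).trace = (W * E).trace := by
      rw [trace_mul_cycle, hSS, trace_mul_comm]
    have key := logdet_le_trace hM
    rw [hdetM, htrM, Real.log_mul hWdpos.ne' hEdpos.ne'] at key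
    linarith
  have hInv : (E⁻¹).PosDef := hE.inv
  have heq : Real.log (E⁻¹).det.re - ((E⁻¹ * E).trace).re + n = - Real.log E.det.re := by
    have h1 : E⁻¹ * E = 1 := nonsing_inv_mul E hEunit
    have h2 : (E⁻¹).det = ↑(E.det.re)⁻¹ := by
      rw [det_nonsing_inv, Ring.inverse_eq_inv']
      conv_lhs => rw [hEd]
      exact (Complex.ofReal_inv _).symm
    rw [h1, trace_one, h2, Complex.ofReal_re, Real.log_inv]
    simp
  refine ⟨hineq, hInv, heq, ⟨⟨E⁻¹, hInv, heq.symm⟩, ?_⟩⟩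
  rintro v ⟨W, hW, rfl⟩
  exact hineq W hW
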